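/- arXiv:1007.3450 — 2 statements merged into one kernel-verified Lean document; each statement's English description precedes it below -/
import Mathlib

section
/- Define the map φ on parameters (e_0,...,e_{L−1}, κ_0,...,κ_{L−1}, θ) by φ(e_0) = κ_0 − e_0 − 1, φ(e_n) = −e_{L−n} for n ≠ 0, φ(κ_0) = κ_0, φ(κ_n) = −κ_{L−n} for n ≠ 0, and φ(θ) = κ_0 − θ, and on canonical variables (q_n, p_n, s)_{1≤n≤L−1} by φ(q_n) = s p_{L−n}/(q_{L−n} p_{L−n} − κ_{L−n}), φ(p_n) = q_{L−n}(κ_{L−n} − q_{L−n} p_{L−n})/s (indices mod L with the convention q_{L−n} meaning index L−n in 1..L−1). Then φ is an involution: φ² = id on both parameters and variables, wherever the expressions are defined (q_n p_n ≠ κ_n, s ≠ 0). -/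
/-- Remark 8.3: the map `φ` defined on parameters by
`φ(e₀) = κ₀−e₀−1`, `φ(eₙ) = −e_{L−n}` (n ≠ 0), `φ(κ₀) = κ₀`, `φ(κₙ) = −κ_{L−n}` (n ≠ 0),
`φ(θ) = κ₀−θ`, and on canonical variables (1 ≤ n ≤ L−1) by
`φ(qₙ) = s p_{L−n}/(q_{L−n}p_{L−n} − κ_{L−n})`,
`φ(pₙ) = q_{L−n}(κ_{L−n} − q_{L−n}p_{L−n})/s`, is an involution wherever defined
(`qₙpₙ ≠ κₙ`, `s ≠ 0`): applying `φ` twice returns all parameters and variables. -/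
theorem stmt_17 (L : ℕ) (hL : 2 ≤ L) (s θ : ℂ) (hs : s ≠ 0)
    (e κ q p : ℕ → ℂ)
    (hqp : ∀ n, 1 ≤ n → n ≤ L - 1 → q n * p n ≠ κ n)
    (e' κ' q' p' : ℕ → ℂ) (θ' : ℂ)
    (he'0 : e' 0 = κ 0 - e 0 - 1)
    (he' : ∀ n, 1 ≤ n → n ≤ L - 1 → e' n = -e (L - n))
    (hκ'0 : κ' 0 = κ 0)
    (hκ' : ∀ n, 1 ≤ n → n ≤ L - 1 → κ' n = -κ (L - n))
    (hθ' : θ' = κ 0 - θ)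
    (hq' : ∀ n, 1 ≤ n → n ≤ L - 1 →
      q' n = s * p (L - n) / (q (L - n) * p (L - n) - κ (L - n)))
    (hp' : ∀ n, 1 ≤ n → n ≤ L - 1 →
      p' n = q (L - n) * (κ (L - n) - q (L - n) * p (L - n)) / s)
    (e'' κ'' q'' p'' : ℕ → ℂ) (θ'' : ℂ)
    (he''0 : e'' 0 = κ' 0 - e' 0 - 1)
    (he'' : ∀ n, 1 ≤ n → n ≤ L - 1 → e'' n = -e' (L - n))
    (hκ''0 : κ'' 0 = κ' 0)
    (hκ'' : ∀ n, 1 ≤ n → n ≤ L - 1 → κ'' n = -κ' (L - n))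
    (hθ'' : θ'' = κ' 0 - θ')
    (hq'' : ∀ n, 1 ≤ n → n ≤ L - 1 →
      q'' n = s * p' (L - n) / (q' (L - n) * p' (L - n) - κ' (L - n)))
    (hp'' : ∀ n, 1 ≤ n → n ≤ L - 1 →
      p'' n = q' (L - n) * (κ' (L - n) - q' (L - n) * p' (L - n)) / s) :
    e'' 0 = e 0 ∧ κ'' 0 = κ 0 ∧ θ'' = θ ∧
      (∀ n, 1 ≤ n → n ≤ L - 1 →
        e'' n = e n ∧ κ'' n = κ n ∧ q'' n = q n ∧ p'' n = p n) := by
  refine ⟨by rw [he''0, hκ'0, he'0]; ring, by rw [hκ''0, hκ'0],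
    by rw [hθ'', hκ'0, hθ']; ring, ?_⟩
  intro n h1 h2
  have hm1 : 1 ≤ L - n := by omega
  have hm2 : L - n ≤ L - 1 := by omega
  have hback : L - (L - n) = n := by omega
  have hd : q (L - n) * p (L - n) - κ (L - n) ≠ 0 :=
    sub_ne_zero.mpr (hqp _ hm1 hm2)
  have hd' : q n * p n - κ n ≠ 0 := sub_ne_zero.mpr (hqp n h1 h2)
  have hd'' : p n * q n - κ n ≠ 0 := by rw [mul_comm]; exact hd'
  have hQP : q' (L - n) * p' (L - n) = -(q n * p n) := by
    rw [hq' _ hm1 hm2, hp' _ hm1 hm2, hback]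
    field_simp
    ring
  refine ⟨?_, ?_, ?_, ?_⟩
  · rw [he'' n h1 h2, he' _ hm1 hm2, hback]; ring
  · rw [hκ'' n h1 h2, hκ' _ hm1 hm2, hback]; ring
  · rw [hq'' n h1 h2, hQP, hp' _ hm1 hm2, hκ' _ hm1 hm2, hback]
    rw [div_eq_iff (by intro h; apply hd'; linear_combination -h)]
    field_simp
    ring
  · rw [hp'' n h1 h2, hQP, hq' _ hm1 hm2, hκ' _ hm1 hm2, hback]
    rw [div_eq_iff hs]
    field_simp
    ring
end

section
/- Let g^{(i)}: ℤ² → ℂ and f^{(i)}: ℤ² → ℂ∖{0} for i in a finite index set, let t_i be nonzero scalars with (t_i/t_j)^L ≠ 1, and suppose U, V : ℤ² → ℂ satisfy V_{m,n} − U_{m,n} = g_{m,n} and U_{m−1,n}/V_{m,n−1} = (t_j f^{(j)}_{m,n})/(t_i f^{(i)}_{m,n}) together with the periodicities U_{m+L,n} = U_{m,n+L} = U_{m,n} (and same for V, f, g). Then U is uniquely determined and U_{m,n} = (1/((t_i/t_j)^L − 1)) Σ_{b=1}^L g_{m−b+1, n+b−1} Π_{a=1}^{b−1} (t_i f^{(i)}_{m−a+1,n+a})/(t_j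 f^{(j)}_{m−a+1,n+a}). -/
/-- solving equations (uv_fg_1)–(uv_fg_2) of Section 4.  Suppose
`V_{m,n} − U_{m,n} = g_{m,n}` and `t_i f⁽ⁱ⁾_{m,n} U_{m−1,n} = t_j f⁽ʲ⁾_{m,n} V_{m,n−1}`,
with all of `U, V, g, f⁽ⁱ⁾, f⁽ʲ⁾` being `(L,L)`-periodic, `f⁽ⁱ⁾, f⁽ʲ⁾` nonvanishing and
satisfying the conservation law (their product over any `L` consecutive anti-diagonal
points is `1`, as holds in the paper), and `(t_i/t_j)^L ≠ 1`.  Then `U` is uniquely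
determined by the stated closed formula
`U_{m,n} = ((t_i/t_j)^L − 1)⁻¹ Σ_{b=1}^L g_{m−b+1,n+b−1}
  Π_{a=1}^{b−1} (t_i f⁽ⁱ⁾_{m−a+1,n+a})/(t_j f⁽ʲ⁾_{m−a+1,n+a})`. -/
theorem stmt_19 (L : ℕ) (hL : 2 ≤ L) (ti tj : ℂ) (hti : ti ≠ 0) (htj : tj ≠ 0)
    (hx : (ti / tj) ^ L ≠ 1)
    (g fi fj U V : ℤ → ℤ → ℂ)
    (hfi : ∀ m n, fi m n ≠ 0) (hfj : ∀ m n, fj m n ≠ 0)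
    (hperU1 : ∀ m n, U (m + L) n = U m n) (hperU2 : ∀ m n, U m (n + L) = U m n)
    (hperV1 : ∀ m n, V (m + L) n = V m n) (hperV2 : ∀ m n, V m (n + L) = V m n)
    (hperg1 : ∀ m n, g (m + L) n = g m n) (hperg2 : ∀ m n, g m (n + L) = g m n)
    (hperfi1 : ∀ m n, fi (m + L) n = fi m n) (hperfi2 : ∀ m n, fi m (n + L) = fi m n)
    (hperfj1 : ∀ m n, fj (m + L) n = fj m n) (hperfj2 : ∀ m n, fj m (n + L) = fj m n)
    (hconsi : ∀ m n : ℤ, ∏ a ∈ Finset.range L, fi (m + (a : ℤ)) (n - (a : ℤ)) = 1)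
    (hconsj : ∀ m n : ℤ, ∏ a ∈ Finset.range L, fj (m + (a : ℤ)) (n - (a : ℤ)) = 1)
    (heq1 : ∀ m n, V m n - U m n = g m n)
    (heq2 : ∀ m n, ti * fi m n * U (m - 1) n = tj * fj m n * V m (n - 1)) :
    ∀ m n : ℤ, U m n = ((ti / tj) ^ L - 1)⁻¹ *
      ∑ b ∈ Finset.range L, g (m - (b : ℤ)) (n + (b : ℤ)) *
        ∏ a ∈ Finset.range b, (ti * fi (m - (a : ℤ)) (n + (a : ℤ) + 1)) /
          (tj * fj (m - (a : ℤ)) (n + (a : ℤ) + 1)) := by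
  
  intro m n
  have hne : (ti / tj) ^ L - 1 ≠ 0 := sub_ne_zero.mpr hx
  -- one step of the recurrence
  have step : ∀ k : ℕ, U (m - (k:ℤ)) (n + (k:ℤ)) =
      ti * fi (m - (k:ℤ)) (n + (k:ℤ) + 1) / (tj * fj (m - (k:ℤ)) (n + (k:ℤ) + 1)) *
        U (m - (k:ℤ) - 1) (n + (k:ℤ) + 1)
      - g (m - (k:ℤ)) (n + (k:ℤ)) := by
    intro k
    have h2 := heq2 (m - (k:ℤ)) (n + (k:ℤ) + 1)
    have h1 := heq1 (m - (k:ℤ)) (n + (k:ℤ))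
    have e1 : (n + (k:ℤ) + 1 - 1) = n + (k:ℤ) := by ring
    rw [e1] at h2
    have hne2 : tj * fj (m - (k:ℤ)) (n + (k:ℤ) + 1) ≠ 0 := mul_ne_zero htj (hfj _ _)
    rw [div_mul_eq_mul_div, eq_sub_iff_add_eq, eq_div_iff hne2]
    linear_combination -h2 - (tj * fj (m - (k:ℤ)) (n + (k:ℤ) + 1)) * h1
  have key : ∀ k : ℕ, U m n =
      (∏ a ∈ Finset.range k, ti * fi (m - (a:ℤ)) (n + (a:ℤ) + 1) /
          (tj * fj (m - (a:ℤ)) (n + (a:ℤ) + 1))) * U (m - (k:ℤ)) (n + (k:ℤ))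
      - ∑ b ∈ Finset.range k, g (m - (b:ℤ)) (n + (b:ℤ)) *
          ∏ a ∈ Finset.range b, ti * fi (m - (a:ℤ)) (n + (a:ℤ) + 1) /
            (tj * fj (m - (a:ℤ)) (n + (a:ℤ) + 1)) := by
    intro k
    induction k with
    | zero => simp
    | succ k ih =>
      rw [Finset.prod_range_succ, Finset.sum_range_succ]
      push_cast
      rw [show m - ((k:ℤ) + 1) = m - (k:ℤ) - 1 from by ring,
        show n + ((k:ℤ) + 1) = n + (k:ℤ) + 1 from by ring, ih, step k]
      ring
  -- reflected conservation law
  have hprod : ∀ (f : ℤ → ℤ → ℂ), (∀ m n : ℤ, ∏ a ∈ Finset.range L, f (m + (a:ℤ)) (n - (a:ℤ)) = 1) →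
      ∏ a ∈ Finset.range L, f (m - (a:ℤ)) (n + (a:ℤ) + 1) = 1 := by
    intro f hf
    have h := hf (m - ((L:ℤ) - 1)) (n + L)
    rw [← Finset.prod_range_reflect] at h
    rw [← h]
    refine Finset.prod_congr rfl ?_
    intro a ha
    simp only [Finset.mem_range] at ha
    have hc : ((L - 1 - a : ℕ) : ℤ) = (L : ℤ) - 1 - a := by
      have : a + 1 ≤ L := ha
      push_cast [Nat.cast_sub (by omega : a ≤ L - 1), Nat.cast_sub (by omega : 1 ≤ L)]
      ring
    rw [hc]
    congr 1 <;> ring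
  have hP : (∏ a ∈ Finset.range L, ti * fi (m - (a:ℤ)) (n + (a:ℤ) + 1) /
      (tj * fj (m - (a:ℤ)) (n + (a:ℤ) + 1))) = (ti / tj) ^ L := by
    rw [Finset.prod_div_distrib, Finset.prod_mul_distrib, Finset.prod_mul_distrib,
      Finset.prod_const, Finset.prod_const, hprod fi hconsi, hprod fj hconsj,
      mul_one, mul_one, Finset.card_range, div_pow]
  have hU : U (m - (L:ℤ)) (n + (L:ℤ)) = U m n := by
    have h1 := hperU2 (m - (L:ℤ)) n
    have h2 := hperU1 (m - (L:ℤ)) n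
    have e : m - (L:ℤ) + (L:ℤ) = m := by ring
    rw [e] at h2
    rw [h1, h2]
  have hk := key L
  rw [hP, hU] at hk
  have hS : ((ti / tj) ^ L - 1) * U m n =
      ∑ b ∈ Finset.range L, g (m - (b:ℤ)) (n + (b:ℤ)) *
        ∏ a ∈ Finset.range b, ti * fi (m - (a:ℤ)) (n + (a:ℤ) + 1) /
          (tj * fj (m - (a:ℤ)) (n + (a:ℤ) + 1)) := by linear_combination -hk
  rw [← hS, inv_mul_cancel_left₀ hne]
end
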